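/- For any simple hypergraph H and any nonnegative integers h > k, the L(h,k)-chromatic number of H equals the L(h,k)-chromatic number of its 2-section: λ_{h,k}(H) = λ_{h,k}([H]_2). -/

import Mathlib

open scoped Classical

/-- The "colour distance" between two vertices under a colouring `f`. -/
def hDist {V : Type*} (f : V → ℕ) (u v : V) : ℕ := ((f u : ℤ) - (f v : ℤ)).natAbs

/-- An `L(h,k)`-colouring of the hypergraph with edge family `E`. -/
def IsLColoring {V : Type*} (E : Finset (Finset V)) (h k : ℕ) (f : V → ℕ) : Prop :=
  (∀ u v : V, u ≠ v → (∃ e ∈ E, u ∈ e ∧ v ∈ e) → h ≤ hDist f u v) ∧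
  (∀ u v : V, u ≠ v →
    (∃ e₁ ∈ E, ∃ e₂ ∈ E, u ∈ e₁ ∧ v ∈ e₂ ∧ ((e₁ ∩ e₂) \ {u, v}).Nonempty) →
    k ≤ hDist f u v)

/-- The span of a colouring: maximum colour minus minimum colour. -/
noncomputable def hSpan {V : Type*} [Fintype V] (f : V → ℕ) : ℕ :=
  Finset.univ.sup f - sInf (Set.range f)

/-- The `L(h,k)`-chromatic number of a hypergraph. -/
noncomputable def lamL {V : Type*} [Fintype V] (E : Finset (Finset V)) (h k : ℕ) : ℕ :=
  sInf {s | ∃ f : V → ℕ, IsLColoring E h k f ∧ hSpan f = s}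

/-- A simple hypergraph: edges have cardinality at least 2, and no edge contains another. -/
def HSimple {V : Type*} (E : Finset (Finset V)) : Prop :=
  (∀ e ∈ E, 2 ≤ e.card) ∧ ∀ e₁ ∈ E, ∀ e₂ ∈ E, e₁ ⊆ e₂ → e₁ = e₂

/-- Degree of a vertex in a hypergraph. -/
noncomputable def hDeg {V : Type*} (E : Finset (Finset V)) (v : V) : ℕ :=
  (E.filter (fun e => v ∈ e)).card

/-- The 2-section of a hypergraph. -/
def twoSection {V : Type*} (E : Finset (Finset V)) : SimpleGraph V where
  Adj u v := u ≠ v ∧ ∃ e ∈ E, u ∈ e ∧ v ∈ e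
  symm := by
    refine ⟨?_⟩
    rintro u v ⟨huv, e, he, hu, hv⟩
    exact ⟨huv.symm, e, he, hv, hu⟩
  loopless := by
    refine ⟨?_⟩
    rintro u ⟨h, -⟩
    exact h rfl
/-- An `L(h,k)`-colouring of a simple graph. -/
def IsGLColoring {V : Type*} (G : SimpleGraph V) (h k : ℕ) (f : V → ℕ) : Prop :=
  (∀ u v : V, G.Adj u v → h ≤ hDist f u v) ∧
  (∀ u v : V, G.dist u v = 2 → k ≤ hDist f u v)

/-- The `L(h,k)`-chromatic number of a simple graph. -/
noncomputable def lamG {V : Type*} [Fintype V] (G : SimpleGraph V) (h k : ℕ) : ℕ :=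
  sInf {s | ∃ f : V → ℕ, IsGLColoring G h k f ∧ hSpan f = s}

/-- The edge boundary of a vertex set `F`: edges with exactly one endpoint in `F`. -/
def graphBoundary {V : Type*} (G : SimpleGraph V) (F : Finset V) : Set (Sym2 V) :=
  {e | e ∈ G.edgeSet ∧ ∃ a b, e = s(a, b) ∧ a ∈ F ∧ b ∉ F}

/-- The expansion (isoperimetric) constant of a graph. -/
noncomputable def expansion {V : Type*} [Fintype V] (G : SimpleGraph V) : ℝ :=
  sInf {r : ℝ | ∃ F : Finset V, 0 < F.card ∧ 2 * F.card ≤ Fintype.card V ∧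
      r = (graphBoundary G F).ncard / F.card}

lemma key_iff {V : Type*} (E : Finset (Finset V)) (h k : ℕ) (hhk : k < h) (f : V → ℕ) :
    IsLColoring E h k f ↔ IsGLColoring (twoSection E) h k f := by
  constructor
  · rintro ⟨h1, h2⟩
    constructor
    · rintro u v ⟨hne, he⟩
      exact h1 u v hne he
    · intro u v hd
      have hr : (twoSection E).Reachable u v := by
        by_contra hc
        rw [SimpleGraph.dist_eq_zero_of_not_reachable hc] at hd
        omega
      obtain ⟨p, hp⟩ := hr.exists_walk_length_eq_dist
      rw [hd] at hp
      have hne : u ≠ v := by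
        rintro rfl
        rw [SimpleGraph.dist_self] at hd; omega
      match p, hp with
      | .cons (v := w) ha (.cons hb .nil), _ =>
        obtain ⟨hwu, e₁, he₁, hu₁, hw₁⟩ := ha
        obtain ⟨hwv, e₂, he₂, hw₂, hv₂⟩ := hb
        refine h2 u v hne ⟨e₁, he₁, e₂, he₂, hu₁, hv₂, w, ?_⟩
        simp only [Finset.mem_sdiff, Finset.mem_inter, Finset.mem_insert, Finset.mem_singleton]
        exact ⟨⟨hw₁, hw₂⟩, by push_neg; exact ⟨fun hh => hwu hh.symm, hwv⟩⟩
  · rintro ⟨g1, g2⟩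
    constructor
    · intro u v hne he
      exact g1 u v ⟨hne, he⟩
    · rintro u v hne ⟨e₁, he₁, e₂, he₂, hu₁, hv₂, w, hw⟩
      simp only [Finset.mem_sdiff, Finset.mem_inter, Finset.mem_insert, Finset.mem_singleton,
        not_or] at hw
      obtain ⟨⟨hw₁, hw₂⟩, hwu, hwv⟩ := hw
      by_cases hadj : (twoSection E).Adj u v
      · exact le_trans hhk.le (g1 u v hadj)
      · have ha : (twoSection E).Adj u w := ⟨fun hh => hwu hh.symm, e₁, he₁, hu₁, hw₁⟩
        have hb : (twoSection E).Adj w v := ⟨fun hh => hwv hh, e₂, he₂, hw₂, hv₂⟩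
        have hle : (twoSection E).dist u v ≤ 2 :=
          SimpleGraph.dist_le (SimpleGraph.Walk.cons ha (SimpleGraph.Walk.cons hb .nil))
        have h0 : (twoSection E).dist u v ≠ 0 := by
          intro hc
          rcases SimpleGraph.dist_eq_zero_iff_eq_or_not_reachable.mp hc with hh | hh
          · exact hne hh
          · exact hh ⟨.cons ha (.cons hb .nil)⟩
        have h1' : (twoSection E).dist u v ≠ 1 := fun hc =>
          hadj (SimpleGraph.dist_eq_one_iff_adj.mp hc)
        exact g2 u v (by omega)

/-- For any simple hypergraph `H` and nonnegative integers `h > k`,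
`λ_{h,k}(H) = λ_{h,k}([H]₂)`, where `[H]₂` is the 2-section of `H`. -/
theorem lamL_eq_lamG_twoSection {V : Type*} [Fintype V] (E : Finset (Finset V))
    (h k : ℕ) (hhk : k < h) (hsimple : HSimple E) :
    lamL E h k = lamG (twoSection E) h k := by
  unfold lamL lamG
  congr 1
  ext s
  simp only [Set.mem_setOf_eq, key_iff E h k hhk]
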